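/- Let M : ℝ³ → ℝ^{3×3} be a continuous map into symmetric positive semidefinite matrices, and let l₁, l₂, l₃ be linear forms on ℝ³, not all identically zero. If Σ_{i,j} lᵢ(y)lⱼ(y) cof(M(y))_{ij} = 0 for all y ∈ ℝ³, then det(cof(M(y))) = 0 for all y, and hence det(M(y)) = 0 for all y ∈ ℝ³. -/

import Mathlib

open Matrix

/-- The cofactor matrix of a square matrix: the transpose of the adjugate,
so that `T * (cof T)ᵀ = det T • 1`. -/
noncomputable def cof {n : ℕ} (T : Matrix (Fin n) (Fin n) ℝ) : Matrix (Fin n) (Fin n) ℝ :=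
  (Matrix.adjugate T)ᵀ

lemma posDef_of_posSemidef_det_ne_zero {n : ℕ} {A : Matrix (Fin n) (Fin n) ℝ}
    (h : A.PosSemidef) (hd : A.det ≠ 0) : A.PosDef := by
  refine PosDef.of_dotProduct_mulVec_pos h.1 fun x hx => ?_
  rcases lt_or_eq_of_le (h.dotProduct_mulVec_nonneg x) with hlt | heq
  · exact hlt
  · exfalso
    have h0 : A *ᵥ x = 0 := (h.dotProduct_mulVec_zero_iff x).mp heq.symm
    exact hx (Matrix.eq_zero_of_mulVec_eq_zero hd h0)

theorem cof_degenerate_implies_det_zero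
    (M : (Fin 3 → ℝ) → Matrix (Fin 3) (Fin 3) ℝ)
    (hcont : Continuous M)
    (hpsd : ∀ y, (M y).PosSemidef) (hsymm : ∀ y, (M y).IsSymm)
    (l : Fin 3 → (Fin 3 → ℝ) →ₗ[ℝ] ℝ)
    (hl : ¬ ∀ i, l i = 0)
    (hzero : ∀ y : Fin 3 → ℝ, ∑ i, ∑ j, l i y * l j y * cof (M y) i j = 0) :
    (∀ y : Fin 3 → ℝ, (cof (M y)).det = 0) ∧ (∀ y : Fin 3 → ℝ, (M y).det = 0) := by
  -- Step 1: det (M y) = 0 whenever some lᵢ(y) ≠ 0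
  have key : ∀ y : Fin 3 → ℝ, (∃ i, l i y ≠ 0) → (M y).det = 0 := by
    rintro y ⟨i0, hi0⟩
    by_contra hdet
    have hpd : (M y).PosDef := posDef_of_posSemidef_det_ne_zero (hpsd y) hdet
    have hip : ((M y)⁻¹).PosDef := hpd.inv
    set v : Fin 3 → ℝ := fun i => l i y with hv
    have hvne : v ≠ 0 := by
      intro h
      exact hi0 (by rw [show l i0 y = v i0 from rfl, h]; rfl)
    -- cof (M y) = adjugate (M y)
    have hc : cof (M y) = adjugate (M y) := by
      rw [cof, Matrix.adjugate_transpose, (hsymm y).eq]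
    have hadj : adjugate (M y) = (M y).det • (M y)⁻¹ := by
      rw [Matrix.inv_def, Ring.inverse_eq_inv', smul_smul, mul_inv_cancel₀ hdet, one_smul]
    have hq : v ⬝ᵥ (cof (M y)) *ᵥ v = 0 := by
      calc v ⬝ᵥ (cof (M y)) *ᵥ v
          = ∑ i, ∑ j, l i y * l j y * cof (M y) i j := by
            simp only [dotProduct, mulVec, Finset.mul_sum]
            refine Finset.sum_congr rfl fun i _ => Finset.sum_congr rfl fun j _ => ?_
            ring
        _ = 0 := hzero y
    have hpos : 0 < v ⬝ᵥ (cof (M y)) *ᵥ v := by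
      rw [hc, hadj, smul_mulVec, dotProduct_smul, smul_eq_mul]
      have h1 : 0 < (M y).det := hpd.det_pos
      have h2 : 0 < v ⬝ᵥ (M y)⁻¹ *ᵥ v := by
        have := hip.dotProduct_mulVec_pos hvne
        rwa [star_trivial] at this
      positivity
    rw [hq] at hpos
    exact lt_irrefl _ hpos
  -- Step 2: extend to all y by continuity
  push_neg at hl
  obtain ⟨i0, hi0⟩ := hl
  obtain ⟨u, hu⟩ : ∃ u, l i0 u ≠ 0 := by
    by_contra h
    push_neg at h
    exact hi0 (LinearMap.ext fun x => h x)
  have hg : Continuous fun y => (M y).det := hcont.matrix_det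
  have hdetzero : ∀ y : Fin 3 → ℝ, (M y).det = 0 := by
    intro y
    by_cases hy : l i0 y ≠ 0
    · exact key y ⟨i0, hy⟩
    push_neg at hy
    -- approach y along y + (1/(n+1)) • u
    have htend0 : Filter.Tendsto (fun n : ℕ => (1 / ((n : ℝ) + 1))) Filter.atTop (nhds 0) :=
      tendsto_one_div_add_atTop_nhds_zero_nat
    have htendy : Filter.Tendsto (fun n : ℕ => y + (1 / ((n : ℝ) + 1)) • u)
        Filter.atTop (nhds y) := by
      have hc2 : Continuous fun t : ℝ => y + t • u := by continuity
      have := (hc2.tendsto 0).comp htend0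
      simpa [Function.comp_def] using this
    have htendg : Filter.Tendsto (fun n : ℕ => (M (y + (1 / ((n : ℝ) + 1)) • u)).det)
        Filter.atTop (nhds ((M y).det)) := (hg.tendsto y).comp htendy
    have hval : ∀ n : ℕ, (M (y + (1 / ((n : ℝ) + 1)) • u)).det = 0 := by
      intro n
      refine key _ ⟨i0, ?_⟩
      have hne : (1 / ((n : ℝ) + 1)) ≠ 0 := by positivity
      rw [map_add, _root_.map_smul, hy, zero_add, smul_eq_mul]
      exact mul_ne_zero hne hu
    have : Filter.Tendsto (fun n : ℕ => (M (y + (1 / ((n : ℝ) + 1)) • u)).det)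
        Filter.atTop (nhds 0) :=
      Filter.Tendsto.congr (fun n => (hval n).symm) tendsto_const_nhds
    exact tendsto_nhds_unique htendg this
  refine ⟨fun y => ?_, hdetzero⟩
  rw [cof, Matrix.det_transpose, Matrix.det_adjugate, hdetzero y]
  simp
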